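/- Let W be a class of 1-cells of a bicategory B that contains all equivalences, is stable under composition, is closed under invertible 2-cells, and satisfies (0-Frc), (1-Frc) and (2-Frc). Then W satisfies the final clause of Pronk's axiom BF4: for every w : C → D in W, parallel 1-cells f, g : B → C, 2-cell α : w ∘ f ⟹ w ∘ g, and any two triples (A₁, u₁, β₁) and (A₂, u₂, β₂), where uᵢ : Aᵢ → B lies in W and βᵢ : f ∘ uᵢ ⟹ g ∘ uᵢ satisfies a_{w,g,uᵢ} ∘ (α ▷ uᵢ) = (w ◁ βᵢ) ∘ a_{w,f,uᵢ}, there exist an object X, 1-cells s : X → A₁ and t : X → A₂, and an invertible 2-cell ε : u₁ ∘ s ≅ u₂ ∘ t such that u₁ ∘ s and u₂ ∘ t lie in W and the following two composite 2-cells from f ∘ (u₁ ∘ s) to g ∘ (u₂ ∘ t) agree: f ∘ (u₁ ∘ s) ⟹(f ◁ ε) f ∘ (u₂ ∘ t) ⟹(a⁻¹) (f ∘ u₂) ∘ t ⟹(β₂ ▷ t) (g ∘ u₂) ∘ t ⟹(a) g ∘ (u₂ ∘ t) equals f ∘ (u₁ ∘ s) ⟹(a⁻¹) (f ∘ u₁)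 ∘ s ⟹(β₁ ▷ s) (g ∘ u₁) ∘ s ⟹(a) g ∘ (u₁ ∘ s) ⟹(g ◁ ε) g ∘ (u₂ ∘ t), where a denotes associators. -/

import Mathlib

open CategoryTheory Bicategory

universe w v u

namespace Paper

variable (B : Type u) [Bicategory.{w, v} B]

/-- A 1-cell is an equivalence if there is a 1-cell in the opposite direction and invertible
2-cells relating the two composites to identities. -/
def IsEquiv1Cell {a b : B} (f : a ⟶ b) : Prop :=
  ∃ g : b ⟶ a, Nonempty (f ≫ g ≅ 𝟙 a) ∧ Nonempty (g ≫ f ≅ 𝟙 b)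

/-- Axiom (0-Frc). -/
def Frc0 (W : ∀ ⦃a b : B⦄, (a ⟶ b) → Prop) : Prop :=
  ∀ ⦃A B' C : B⦄ (w : A ⟶ B') (f : C ⟶ B'), W w →
    ∃ (D : B) (u : D ⟶ C) (h : D ⟶ A), W u ∧ Nonempty (u ≫ f ≅ h ≫ w)

/-- Axiom (1-Frc). -/
def Frc1 (W : ∀ ⦃a b : B⦄, (a ⟶ b) → Prop) : Prop :=
  ∀ ⦃B' C D : B⦄ (w : C ⟶ D) (f g : B' ⟶ C), W w → ∀ α : f ≫ w ⟶ g ≫ w,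
    ∃ (A : B) (u : A ⟶ B'), W u ∧ ∃ β : u ≫ f ⟶ u ≫ g,
      (u ◁ α) ≫ (α_ u g w).inv = (α_ u f w).inv ≫ (β ▷ w)

/-- Axiom (2-Frc). -/
def Frc2 (W : ∀ ⦃a b : B⦄, (a ⟶ b) → Prop) : Prop :=
  ∀ ⦃B' C D : B⦄ (w : C ⟶ D) (f g : B' ⟶ C), W w → ∀ α β : f ⟶ g,
    α ▷ w = β ▷ w → ∃ (A : B) (u : A ⟶ B'), W u ∧ u ◁ α = u ◁ β

/-- Pronk's axiom BF4, final clause, follows from the closure axioms together with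
(0-Frc), (1-Frc) and (2-Frc). -/
theorem bf4_final_clause (W : ∀ ⦃a b : B⦄, (a ⟶ b) → Prop)
    (hequiv : ∀ ⦃a b : B⦄ (f : a ⟶ b), IsEquiv1Cell B f → W f)
    (hcomp : ∀ ⦃a b c : B⦄ (f : a ⟶ b) (g : b ⟶ c), W f → W g → W (f ≫ g))
    (hiso : ∀ ⦃a b : B⦄ (f w : a ⟶ b), W w → Nonempty (f ≅ w) → W f)
    (h0 : Frc0 B W) (h1 : Frc1 B W) (h2 : Frc2 B W) :
    ∀ ⦃B' C D : B⦄ (w : C ⟶ D), W w → ∀ (f g : B' ⟶ C) (α : f ≫ w ⟶ g ≫ w)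
      (A₁ A₂ : B) (u₁ : A₁ ⟶ B') (u₂ : A₂ ⟶ B'), W u₁ → W u₂ →
      ∀ (β₁ : u₁ ≫ f ⟶ u₁ ≫ g) (β₂ : u₂ ≫ f ⟶ u₂ ≫ g),
        (u₁ ◁ α) ≫ (α_ u₁ g w).inv = (α_ u₁ f w).inv ≫ (β₁ ▷ w) →
        (u₂ ◁ α) ≫ (α_ u₂ g w).inv = (α_ u₂ f w).inv ≫ (β₂ ▷ w) →
        ∃ (X : B) (s : X ⟶ A₁) (t : X ⟶ A₂) (ε' : s ≫ u₁ ≅ t ≫ u₂),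
          W (s ≫ u₁) ∧ W (t ≫ u₂) ∧
            (ε'.hom ▷ f) ≫ (α_ t u₂ f).hom ≫ (t ◁ β₂) ≫ (α_ t u₂ g).inv =
              (α_ s u₁ f).hom ≫ (s ◁ β₁) ≫ (α_ s u₁ g).inv ≫ (ε'.hom ▷ g) := by
  intro B' C D w hw f g α A₁ A₂ u₁ u₂ hu₁ hu₂ β₁ β₂ hβ₁ hβ₂
  obtain ⟨X₀, s₀, t₀, hs₀, ⟨ε₀⟩⟩ := h0 u₂ u₁ hu₂
  have hβ₁' : β₁ ▷ w = (α_ u₁ f w).hom ≫ (u₁ ◁ α) ≫ (α_ u₁ g w).inv :=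
    ((Iso.inv_comp_eq _).mp hβ₁.symm).symm ▸ by simp
  have hβ₂' : β₂ ▷ w = (α_ u₂ f w).hom ≫ (u₂ ◁ α) ≫ (α_ u₂ g w).inv :=
    ((Iso.inv_comp_eq _).mp hβ₂.symm).symm ▸ by simp
  set γ : (s₀ ≫ u₁) ≫ f ⟶ (t₀ ≫ u₂) ≫ g :=
    (ε₀.hom ▷ f) ≫ (α_ t₀ u₂ f).hom ≫ (t₀ ◁ β₂) ≫ (α_ t₀ u₂ g).inv with hγ
  set δ : (s₀ ≫ u₁) ≫ f ⟶ (t₀ ≫ u₂) ≫ g :=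
    (α_ s₀ u₁ f).hom ≫ (s₀ ◁ β₁) ≫ (α_ s₀ u₁ g).inv ≫ (ε₀.hom ▷ g) with hδ
  have key : γ ▷ w = δ ▷ w := by
    have e1 : γ ▷ w = (α_ (s₀ ≫ u₁) f w).hom ≫ (ε₀.hom ▷ (f ≫ w)) ≫
        ((t₀ ≫ u₂) ◁ α) ≫ (α_ (t₀ ≫ u₂) g w).inv := by
      rw [hγ]
      simp only [comp_whiskerRight, whisker_assoc, Category.assoc, hβ₂']
      bicategory
    have e2 : δ ▷ w = (α_ (s₀ ≫ u₁) f w).hom ≫ ((s₀ ≫ u₁) ◁ α) ≫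
        (ε₀.hom ▷ (g ≫ w)) ≫ (α_ (t₀ ≫ u₂) g w).inv := by
      rw [hδ]
      simp only [comp_whiskerRight, whisker_assoc, Category.assoc, hβ₁']
      bicategory
    rw [e1, e2, ← whisker_exchange_assoc]
  obtain ⟨X, u', hu', hγδ⟩ := h2 w _ _ hw γ δ key
  refine ⟨X, u' ≫ s₀, u' ≫ t₀,
    α_ u' s₀ u₁ ≪≫ whiskerLeftIso u' ε₀ ≪≫ (α_ u' t₀ u₂).symm, ?_, ?_, ?_⟩
  · exact hcomp _ _ (hcomp _ _ hu' hs₀) hu₁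
  · refine hiso _ ((u' ≫ s₀) ≫ u₁) (hcomp _ _ (hcomp _ _ hu' hs₀) hu₁) ⟨?_⟩
    exact (α_ u' s₀ u₁ ≪≫ whiskerLeftIso u' ε₀ ≪≫ (α_ u' t₀ u₂).symm).symm
  · have l : (((α_ u' s₀ u₁).hom ≫ u' ◁ ε₀.hom ≫ (α_ u' t₀ u₂).inv) ▷ f) ≫
        (α_ (u' ≫ t₀) u₂ f).hom ≫ ((u' ≫ t₀) ◁ β₂) ≫ (α_ (u' ≫ t₀) u₂ g).inv =
        ((α_ u' s₀ u₁).hom ▷ f) ≫ (α_ u' (s₀ ≫ u₁) f).hom ≫ (u' ◁ γ) ≫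
          (α_ u' (t₀ ≫ u₂) g).inv ≫ ((α_ u' t₀ u₂).inv ▷ g) := by
      rw [hγ]
      bicategory
    have r : (α_ (u' ≫ s₀) u₁ f).hom ≫ ((u' ≫ s₀) ◁ β₁) ≫ (α_ (u' ≫ s₀) u₁ g).inv ≫
        (((α_ u' s₀ u₁).hom ≫ u' ◁ ε₀.hom ≫ (α_ u' t₀ u₂).inv) ▷ g) =
        ((α_ u' s₀ u₁).hom ▷ f) ≫ (α_ u' (s₀ ≫ u₁) f).hom ≫ (u' ◁ δ) ≫
          (α_ u' (t₀ ≫ u₂) g).inv ≫ ((α_ u' t₀ u₂).inv ▷ g) := by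
      rw [hδ]
      bicategory
    simpa only [Iso.trans_hom, whiskerLeftIso_hom, Iso.symm_hom, Category.assoc] using
      l.trans (by rw [hγδ]; exact r.symm)

end Paper
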